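/- For the Morse–Thue matrix M = [[1,1],[1,1]], the direct limit of ℤ² → ℤ² → ⋯ with bonding map M is isomorphic to ℤ[1/2], the group of dyadic rationals. -/

import Mathlib

open Matrix

/-- The direct limit of the constant system `H → H → H → ⋯` with all bonding maps equal to
the endomorphism `g`. -/
abbrev DLim (H : Type) [AddCommGroup H] (g : AddMonoid.End H) : Type :=
  AddCommGroup.DirectLimit (fun _ : ℕ => H) (fun i j _ => (g ^ (j - i) : AddMonoid.End H))

noncomputable instance (H : Type) [AddCommGroup H] (g : AddMonoid.End H) :
    AddCommGroup (DLim H g) :=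
  AddCommGroup.DirectLimit.addCommGroup _ _

/-- The endomorphism of `ℤᵈ` given by multiplication by an integer matrix. -/
def matEnd {n : Type} [Fintype n] [DecidableEq n] (M : Matrix n n ℤ) :
    AddMonoid.End (n → ℤ) :=
  M.mulVecLin.toAddMonoidHom

/-- `ℤ[1/2]`: the additive group of dyadic rationals, i.e. the subgroup of `ℚ` generated by
the fractions `1/2ⁿ`. -/
def dyadicRationals : AddSubgroup ℚ :=
  AddSubgroup.closure {q : ℚ | ∃ n : ℕ, q = 1 / 2 ^ n}

namespace MTaux

notation "g" => matEnd (!![1, 1; 1, 1] : Matrix (Fin 2) (Fin 2) ℤ)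

noncomputable abbrev ofl (i : ℕ) :
    (Fin 2 → ℤ) →+ DLim (Fin 2 → ℤ) (matEnd (!![1, 1; 1, 1] : Matrix (Fin 2) (Fin 2) ℤ)) :=
  AddCommGroup.DirectLimit.of (fun _ : ℕ => Fin 2 → ℤ)
    (fun i j _ => ((g) ^ (j - i) : AddMonoid.End (Fin 2 → ℤ))) i

lemma g_apply (v : Fin 2 → ℤ) (x : Fin 2) : (g) v x = v 0 + v 1 := by
  show (!![1, 1; 1, 1] : Matrix (Fin 2) (Fin 2) ℤ).mulVec v x = v 0 + v 1
  fin_cases x <;>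
    simp [Matrix.mulVec, dotProduct, Fin.sum_univ_two]

lemma sum_g_pow (k : ℕ) (v : Fin 2 → ℤ) :
    ((g ^ k) v) 0 + ((g ^ k) v) 1 = 2 ^ k * (v 0 + v 1) := by
  induction k with
  | zero => simp
  | succ k ih =>
    rw [pow_succ']
    have h : ((g) * (g) ^ k) v = (g) (((g) ^ k) v) := rfl
    rw [h, g_apply, g_apply, ih]
    ring

def φ (i : ℕ) : (Fin 2 → ℤ) →+ ℚ where
  toFun v := (v 0 + v 1 : ℤ) / 2 ^ i
  map_zero' := by simp
  map_add' v w := by simp only [Pi.add_apply]; push_cast; ring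

lemma φ_apply (i : ℕ) (v : Fin 2 → ℤ) : φ i v = (v 0 + v 1 : ℤ) / 2 ^ i := rfl

lemma compat : ∀ (i j : ℕ), i ≤ j → ∀ (x : Fin 2 → ℤ),
    φ j ((g ^ (j - i)) x) = φ i x := by
  intro i j hij x
  simp only [φ_apply]
  rw [sum_g_pow]
  have h2 : (2:ℚ) ^ j = 2 ^ (j - i) * 2 ^ i := by
    rw [← pow_add]; congr 1; omega
  push_cast
  rw [h2]
  field_simp

noncomputable def Φ : DLim (Fin 2 → ℤ) (matEnd (!![1, 1; 1, 1] : Matrix (Fin 2) (Fin 2) ℤ)) →+ ℚ :=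
  AddCommGroup.DirectLimit.lift _ _ _ φ compat

lemma Φ_of (i : ℕ) (x : Fin 2 → ℤ) : Φ (ofl i x) = φ i x := by
  simp [Φ, ofl]
  exact AddCommGroup.DirectLimit.lift_of ℚ φ compat i x

lemma Φ_injective : Function.Injective Φ := by
  rw [injective_iff_map_eq_zero]
  intro z hz
  induction z using AddCommGroup.DirectLimit.induction_on with
  | ih i x =>
    rw [show AddCommGroup.DirectLimit.of _ _ i x = ofl i x from rfl] at hz ⊢
    rw [Φ_of, φ_apply] at hz
    have hsum : x 0 + x 1 = 0 := by
      field_simp at hz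
      exact_mod_cast hz
    have hgx : (g) x = 0 := by
      funext j; rw [g_apply]; exact hsum
    have h1 : ((g) ^ (i + 1 - i)) x = (0 : Fin 2 → ℤ) := by
      have h : i + 1 - i = 1 := by omega
      rw [h, pow_one, hgx]
    calc ofl i x = ofl (i + 1) (((g) ^ (i + 1 - i)) x) :=
          (AddCommGroup.DirectLimit.of_f (G := fun _ : ℕ => Fin 2 → ℤ)
            (f := fun i j _ => ((g) ^ (j - i) : AddMonoid.End (Fin 2 → ℤ)))
            (Nat.le_succ i) x).symm
      _ = 0 := by rw [h1]; simp

lemma Φ_range : Φ.range = dyadicRationals := by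
  apply le_antisymm
  · rintro _ ⟨z, rfl⟩
    induction z using AddCommGroup.DirectLimit.induction_on with
    | ih i x =>
      rw [show AddCommGroup.DirectLimit.of _ _ i x = ofl i x from rfl, Φ_of, φ_apply]
      have h : ((x 0 + x 1 : ℤ) : ℚ) / 2 ^ i = (x 0 + x 1) • ((1 : ℚ) / 2 ^ i) := by
        rw [zsmul_eq_mul]; push_cast; ring
      rw [h]
      exact zsmul_mem (AddSubgroup.subset_closure
        (k := {q : ℚ | ∃ n : ℕ, q = 1 / 2 ^ n}) ⟨i, rfl⟩) _
  · rw [dyadicRationals, AddSubgroup.closure_le]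
    rintro _ ⟨n, rfl⟩
    refine AddMonoidHom.mem_range.mpr ⟨ofl n ![1, 0], ?_⟩
    rw [Φ_of, φ_apply]
    norm_num

end MTaux

/-- For the Morse–Thue matrix `M = [[1,1],[1,1]]`, the direct limit of `ℤ² → ℤ² → ⋯` with
bonding map `M` is isomorphic to the group `ℤ[1/2]` of dyadic rationals. -/
theorem morse_thue_direct_limit :
    Nonempty (DLim (Fin 2 → ℤ) (matEnd (!![1, 1; 1, 1] : Matrix (Fin 2) (Fin 2) ℤ))
      ≃+ dyadicRationals) := by
  exact ⟨(AddMonoidHom.ofInjective MTaux.Φ_injective).trans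
    (AddEquiv.addSubgroupCongr MTaux.Φ_range)⟩
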